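/- Trust-region curvature bound for the logistic multinomial (Appendix A.2): let a ∈ ℝ, E > 0, d ≥ 0, and for x ∈ ℝ define q(x) = e^{a+x}/(e^{a+x} + E). Then: (i) for every x, 1/(q(x)(1 − q(x))) = 2 + e^{a+x}/E + E/e^{a+x}; and (ii) setting e* = e^{a−d} if E < e^{a−d}, e* = e^{a+d} if E > e^{a+d}, and e* = E otherwise, and F = 2 + e*/E + E/e*, one has q(x)(1 − q(x)) ≤ 1/F for every x with |x| ≤ d, and F is the largest constant with this property (it is the minimum of 2 + e^{a+x}/E + E/e^{a+x} over |x| ≤ d). -/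

import Mathlib

open Real

/-- Fitted probability `q(x) = e^{a+x} / (e^{a+x} + E)`. -/
noncomputable def qTrust (a E x : ℝ) : ℝ :=
  Real.exp (a + x) / (Real.exp (a + x) + E)

/-- The bounding point `e*` of Appendix A.2. -/
noncomputable def eStar (a E d : ℝ) : ℝ :=
  if E < Real.exp (a - d) then Real.exp (a - d)
  else if Real.exp (a + d) < E then Real.exp (a + d)
  else E

/-- The least curvature-bound constant `F = 2 + e*/E + E/e*`. -/
noncomputable def Fbound (a E d : ℝ) : ℝ :=
  2 + eStar a E d / E + E / eStar a E d

lemma gmin_aux (E t u : ℝ) (hE : 0 < E) (ht : 0 < t) (hu : 0 < u)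
    (h : 0 ≤ (t - u) * (t * u - E ^ 2)) :
    2 + u / E + E / u ≤ 2 + t / E + E / t := by
  have key : (2 + t / E + E / t) - (2 + u / E + E / u)
      = (t - u) * (t * u - E ^ 2) / (E * t * u) := by
    field_simp; ring
  have hpos : (0:ℝ) < E * t * u := by positivity
  have := div_nonneg h hpos.le
  linarith [key]

lemma eStar_pos (a E d : ℝ) (hE : 0 < E) : 0 < eStar a E d := by
  unfold eStar
  split_ifs <;> first | exact Real.exp_pos _ | exact hE

lemma Fbound_le (a E d : ℝ) (hE : 0 < E) (hd : 0 ≤ d) :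
    ∀ x : ℝ, |x| ≤ d →
      Fbound a E d ≤ 2 + Real.exp (a + x) / E + E / Real.exp (a + x) := by
  intro x hx
  obtain ⟨hx1, hx2⟩ := abs_le.mp hx
  set t := Real.exp (a + x) with ht
  have htpos : 0 < t := Real.exp_pos _
  have hlo : Real.exp (a - d) ≤ t := Real.exp_le_exp.mpr (by linarith)
  have hhi : t ≤ Real.exp (a + d) := Real.exp_le_exp.mpr (by linarith)
  unfold Fbound eStar
  split_ifs with h1 h2
  · refine gmin_aux E t _ hE htpos (Real.exp_pos _) ?_
    have hu := Real.exp_pos (a - d)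
    have h3 : E * E < Real.exp (a - d) * Real.exp (a - d) :=
      mul_self_lt_mul_self hE.le h1
    have h4 : Real.exp (a - d) * Real.exp (a - d) ≤ t * Real.exp (a - d) :=
      mul_le_mul_of_nonneg_right hlo hu.le
    have h5 : 0 ≤ t * Real.exp (a - d) - E ^ 2 := by nlinarith
    exact mul_nonneg (by linarith) h5
  · refine gmin_aux E t _ hE htpos (Real.exp_pos _) ?_
    have hu := Real.exp_pos (a + d)
    have h3 : Real.exp (a + d) * Real.exp (a + d) < E * E :=
      mul_self_lt_mul_self hu.le h2
    have h4 : t * Real.exp (a + d) ≤ Real.exp (a + d) * Real.exp (a + d) :=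
      mul_le_mul_of_nonneg_right hhi hu.le
    have h5 : t * Real.exp (a + d) - E ^ 2 ≤ 0 := by nlinarith
    nlinarith
  · exact gmin_aux E t E hE htpos hE
      (by nlinarith [mul_nonneg hE.le (sq_nonneg (t - E))])

theorem logistic_trust_region_bound
    (a E d : ℝ) (hE : 0 < E) (hd : 0 ≤ d) :
    (∀ x : ℝ, 1 / (qTrust a E x * (1 - qTrust a E x))
        = 2 + Real.exp (a + x) / E + E / Real.exp (a + x)) ∧
    (∀ x : ℝ, |x| ≤ d → qTrust a E x * (1 - qTrust a E x) ≤ 1 / Fbound a E d) ∧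
    IsLeast {y : ℝ | ∃ x : ℝ, |x| ≤ d ∧
        y = 2 + Real.exp (a + x) / E + E / Real.exp (a + x)} (Fbound a E d) := by
  have hqq : ∀ x : ℝ, 0 < qTrust a E x * (1 - qTrust a E x) := by
    intro x
    have hex : 0 < Real.exp (a + x) := Real.exp_pos _
    have hs : 0 < Real.exp (a + x) + E := by linarith
    have hq1 : 0 < qTrust a E x := div_pos hex hs
    have hq2 : qTrust a E x < 1 := by
      rw [qTrust, div_lt_one hs]; linarith
    nlinarith
  have hi : ∀ x : ℝ, 1 / (qTrust a E x * (1 - qTrust a E x))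
      = 2 + Real.exp (a + x) / E + E / Real.exp (a + x) := by
    intro x
    have hex : 0 < Real.exp (a + x) := Real.exp_pos _
    have hs : 0 < Real.exp (a + x) + E := by linarith
    rw [qTrust]
    have hE0 : E ≠ 0 := ne_of_gt hE
    field_simp
    ring_nf
    field_simp
    ring
  have hFpos : 0 < Fbound a E d := by
    have := eStar_pos a E d hE
    unfold Fbound; positivity
  refine ⟨hi, ?_, ?_, ?_⟩
  · intro x hx
    have hle := Fbound_le a E d hE hd x hx
    have : Fbound a E d ≤ 1 / (qTrust a E x * (1 - qTrust a E x)) := by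
      rw [hi x]; exact hle
    have h2 := one_div_le_one_div_of_le hFpos this
    rwa [one_div_one_div] at h2
  · -- membership
    unfold Fbound eStar
    split_ifs with h1 h2
    · exact ⟨-d, by simpa [abs_of_nonneg hd] using le_refl d, by
        rw [show a + -d = a - d by ring]⟩
    · exact ⟨d, by simpa [abs_of_nonneg hd], by rfl⟩
    · push_neg at h1 h2
      refine ⟨Real.log E - a, ?_, ?_⟩
      · have hub : Real.log E ≤ a + d := (Real.log_le_iff_le_exp hE).mpr h2
        have hlb : a - d ≤ Real.log E := (Real.le_log_iff_exp_le hE).mpr h1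
        rw [abs_le]; constructor <;> linarith
      · rw [show a + (Real.log E - a) = Real.log E by ring, Real.exp_log hE]
  · intro y hy
    obtain ⟨x, hx, rfl⟩ := hy
    exact Fbound_le a E d hE hd x hx
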